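/- Let t ≥ 2. In the game i-Mark([1,t−1],{t}), writing n = qt + r with 0 ≤ r ≤ t−1: (i) if (q < t and r = 0) or (q ≥ t and r = 1) then g(n) = 0; (ii) if q < t and r ≠ 0 then g(n) = r; (iii) if q ≥ t and r > 1 then g(n) = r − 1; (iv) if q ≥ t and r = 0 then g(n) ∈ {t−1, t}. -/
import Mathlib


/-- The minimum excludant of a finite set of naturals. -/
noncomputable def mex (s : Finset ℕ) : ℕ := sInf {k : ℕ | k ∉ s}

/-- Options of the game i-Mark(S,D) from a heap of `n` tokens:
move to `n - s` for `s ∈ S` (with `1 ≤ s ≤ n`), or to `n / d` for `d ∈ D`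
(with `2 ≤ d` and `d ∣ n`, `n ≥ 1`). -/
def iMarkOptions (S D : Finset ℕ) (n : ℕ) : Finset ℕ :=
  ((S.filter (fun s => 1 ≤ s ∧ s ≤ n)).image (fun s => n - s)) ∪
  ((D.filter (fun d => 2 ≤ d ∧ d ∣ n ∧ 1 ≤ n)).image (fun d => n / d))

theorem iMarkOptions_lt {S D : Finset ℕ} {n m : ℕ} (h : m ∈ iMarkOptions S D n) : m < n := by
  simp only [iMarkOptions, Finset.mem_union, Finset.mem_image, Finset.mem_filter] at h
  rcases h with ⟨s, ⟨_, h1, h2⟩, rfl⟩ | ⟨d, ⟨_, h2, hd, hn⟩, rfl⟩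
  · omega
  · exact Nat.div_lt_self hn h2

/-- The Sprague-Grundy value of a heap of `n` tokens in the game i-Mark(S,D). -/
noncomputable def grundy (S D : Finset ℕ) (n : ℕ) : ℕ :=
  mex ((iMarkOptions S D n).attach.image (fun m => grundy S D m.1))
termination_by n
decreasing_by exact iMarkOptions_lt m.2

/-- `misereP S D n` means `n` is a P-position of i-Mark(S,D) under misère convention:
`n` has at least one option and every option is an N-position. -/
def misereP (S D : Finset ℕ) (n : ℕ) : Prop :=
  (iMarkOptions S D n).Nonempty ∧
    ∀ m : {x // x ∈ iMarkOptions S D n}, ¬ misereP S D m.1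
termination_by n
decreasing_by exact iMarkOptions_lt m.2

lemma mex_eq_of {s : Finset ℕ} {k : ℕ} (h1 : k ∉ s) (h2 : ∀ j < k, j ∈ s) : mex s = k := by
  have hk : k ∈ {j : ℕ | j ∉ s} := h1
  refine le_antisymm (Nat.sInf_le hk) ?_
  by_contra h
  push_neg at h
  exact (Nat.sInf_mem ⟨k, hk⟩) (h2 _ h)

lemma grundy_def' (S D : Finset ℕ) (n : ℕ) :
    grundy S D n = mex ((iMarkOptions S D n).image (grundy S D)) := by
  rw [grundy]
  congr 1
  ext j
  simp [Finset.mem_image]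

lemma grundy_eq_iff {S D : Finset ℕ} {n k : ℕ}
    (h1 : ∀ m ∈ iMarkOptions S D n, grundy S D m ≠ k)
    (h2 : ∀ j < k, ∃ m ∈ iMarkOptions S D n, grundy S D m = j) :
    grundy S D n = k := by
  rw [grundy_def']
  apply mex_eq_of
  · intro hk
    obtain ⟨m, hm, hg⟩ := Finset.mem_image.mp hk
    exact h1 m hm hg
  · intro j hj
    obtain ⟨m, hm, hg⟩ := h2 j hj
    exact Finset.mem_image.mpr ⟨m, hm, hg⟩

lemma mem_opts {t : ℕ} (ht : 2 ≤ t) {n m : ℕ} :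
    m ∈ iMarkOptions (Finset.Icc 1 (t-1)) {t} n ↔
      (∃ s, 1 ≤ s ∧ s ≤ t - 1 ∧ s ≤ n ∧ m = n - s) ∨ (t ∣ n ∧ 1 ≤ n ∧ m = n / t) := by
  simp only [iMarkOptions, Finset.mem_union, Finset.mem_image, Finset.mem_filter,
    Finset.mem_Icc, Finset.mem_singleton]
  constructor
  · rintro (⟨s, ⟨⟨h1, h2⟩, _, h4⟩, rfl⟩ | ⟨d, ⟨rfl, _, hd, hn⟩, rfl⟩)
    · exact Or.inl ⟨s, h1, h2, h4, rfl⟩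
    · exact Or.inr ⟨hd, hn, rfl⟩
  · rintro (⟨s, h1, h2, h4, rfl⟩ | ⟨hd, hn, rfl⟩)
    · exact Or.inl ⟨s, ⟨⟨h1, h2⟩, h1, h4⟩, rfl⟩
    · exact Or.inr ⟨t, ⟨rfl, ht, hd, hn⟩, rfl⟩

lemma key (t : ℕ) (ht : 2 ≤ t) : ∀ n q r, n = q * t + r → r < t →
    (q < t → grundy (Finset.Icc 1 (t-1)) {t} n = r) ∧
    (t ≤ q → r = 0 → (grundy (Finset.Icc 1 (t-1)) {t} n = t - 1 ∨
        grundy (Finset.Icc 1 (t-1)) {t} n = t)) ∧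
    (t ≤ q → r ≠ 0 → grundy (Finset.Icc 1 (t-1)) {t} n = r - 1) := by
  intro n
  induction n using Nat.strong_induction_on with
  | _ n IH =>
    intro q r hn hr
    rcases lt_or_ge q t with hq | hq
    · refine ⟨fun _ => ?_, fun h _ => absurd hq (by omega), fun h _ => absurd hq (by omega)⟩
      apply grundy_eq_iff
      · intro m hm
        rw [mem_opts ht] at hm
        rcases hm with ⟨s, hs1, hs2, hs3, rfl⟩ | ⟨hdvd, hn1, rfl⟩
        · rcases le_or_gt s r with hsr | hsr
          · have h1 := (IH (n - s) (by omega) q (r - s) (by omega) (by omega)).1 hq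
            omega
          · have hq1 : 1 ≤ q := by
              by_contra h
              push_neg at h
              have hq0 : q = 0 := by omega
              subst hq0
              omega
            obtain ⟨q', rfl⟩ : ∃ q', q = q' + 1 := ⟨q - 1, by omega⟩
            have hA : (q' + 1) * t = q' * t + t := by ring
            have h1 := (IH (n - s) (by omega) q' (t + r - s) (by omega) (by omega)).1 (by omega)
            omega
        · have hrd : t ∣ r := (Nat.dvd_add_right (dvd_mul_left t q)).mp (hn ▸ hdvd)
          have hr0 : r = 0 := Nat.eq_zero_of_dvd_of_lt hrd hr
          subst hr0
          have hq1 : 1 ≤ q := by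
            rcases Nat.eq_zero_or_pos q with h | h
            · subst h; omega
            · exact h
          have hdiv : n / t = q := by
            rw [hn, Nat.add_zero, Nat.mul_div_cancel _ (by omega : 0 < t)]
          rw [hdiv]
          have hmul : q * 2 ≤ q * t := Nat.mul_le_mul_left q ht
          have h1 := (IH q (by omega) 0 q (by simp) hq).1 (by omega)
          omega
      · intro j hj
        refine ⟨n - (r - j), (mem_opts ht).mpr (Or.inl ⟨r - j, by omega, by omega, by omega, rfl⟩), ?_⟩
        exact (IH (n - (r - j)) (by omega) q j (by omega) (by omega)).1 hq
    · obtain ⟨q', rfl⟩ : ∃ q', q = q' + 1 := ⟨q - 1, by omega⟩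
      have hA : (q' + 1) * t = q' * t + t := by ring
      refine ⟨fun h => absurd h (by omega), fun _ hr0 => ?_, fun _ hr0 => ?_⟩
      · -- r = 0 case
        subst hr0
        have hdvd : t ∣ n := ⟨q' + 1, by rw [hn]; ring⟩
        have hdiv : n / t = q' + 1 := by
          rw [hn, Nat.add_zero, Nat.mul_div_cancel _ (by omega : 0 < t)]
        have hq'le : q' ≤ q' * t := Nat.le_mul_of_pos_right q' (by omega)
        by_cases hq'' : t ≤ q'
        · by_cases hv : grundy (Finset.Icc 1 (t-1)) {t} (q' + 1) = t - 1
          · right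
            apply grundy_eq_iff
            · intro m hm
              rw [mem_opts ht] at hm
              rcases hm with ⟨s, hs1, hs2, hs3, rfl⟩ | ⟨_, _, rfl⟩
              · have h1 := (IH (n - s) (by omega) q' (t - s) (by omega) (by omega)).2.2 hq'' (by omega)
                omega
              · rw [hdiv]; omega
            · intro j hj
              rcases eq_or_lt_of_le (by omega : j + 1 ≤ t) with hj' | hj'
              · refine ⟨n / t, (mem_opts ht).mpr (Or.inr ⟨hdvd, by omega, rfl⟩), ?_⟩
                rw [hdiv]; omega
              · refine ⟨n - (t - 1 - j), (mem_opts ht).mpr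
                  (Or.inl ⟨t - 1 - j, by omega, by omega, by omega, rfl⟩), ?_⟩
                have h1 := (IH (n - (t - 1 - j)) (by omega) q' (j + 1) (by omega) (by omega)).2.2
                  hq'' (by omega)
                omega
          · left
            apply grundy_eq_iff
            · intro m hm
              rw [mem_opts ht] at hm
              rcases hm with ⟨s, hs1, hs2, hs3, rfl⟩ | ⟨_, _, rfl⟩
              · have h1 := (IH (n - s) (by omega) q' (t - s) (by omega) (by omega)).2.2 hq'' (by omega)
                omega
              · rw [hdiv]; exact hv
            · intro j hj
              refine ⟨n - (t - 1 - j), (mem_opts ht).mpr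
                (Or.inl ⟨t - 1 - j, by omega, by omega, by omega, rfl⟩), ?_⟩
              have h1 := (IH (n - (t - 1 - j)) (by omega) q' (j + 1) (by omega) (by omega)).2.2
                hq'' (by omega)
              omega
        · -- q = t
          right
          apply grundy_eq_iff
          · intro m hm
            rw [mem_opts ht] at hm
            rcases hm with ⟨s, hs1, hs2, hs3, rfl⟩ | ⟨_, _, rfl⟩
            · have h1 := (IH (n - s) (by omega) q' (t - s) (by omega) (by omega)).1 (by omega)
              omega
            · rw [hdiv]
              have h1 := (IH (q' + 1) (by omega) 1 0 (by rw [one_mul]; omega) (by omega)).1 (by omega)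
              omega
          · intro j hj
            rcases Nat.eq_zero_or_pos j with hj0 | hj0
            · subst hj0
              refine ⟨n / t, (mem_opts ht).mpr (Or.inr ⟨hdvd, by omega, rfl⟩), ?_⟩
              rw [hdiv]
              exact (IH (q' + 1) (by omega) 1 0 (by rw [one_mul]; omega) (by omega)).1 (by omega)
            · refine ⟨n - (t - j), (mem_opts ht).mpr
                (Or.inl ⟨t - j, by omega, by omega, by omega, rfl⟩), ?_⟩
              exact (IH (n - (t - j)) (by omega) q' j (by omega) (by omega)).1 (by omega)
      · -- r ≠ 0 case
        apply grundy_eq_iff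
        · intro m hm
          rw [mem_opts ht] at hm
          rcases hm with ⟨s, hs1, hs2, hs3, rfl⟩ | ⟨hdvd, _, rfl⟩
          · rcases lt_trichotomy s r with hsr | hsr | hsr
            · have h1 := (IH (n - s) (by omega) (q' + 1) (r - s) (by omega) (by omega)).2.2
                (by omega) (by omega)
              omega
            · subst hsr
              have h1 := (IH (n - s) (by omega) (q' + 1) 0 (by omega) (by omega)).2.1
                (by omega) rfl
              omega
            · by_cases hq'' : t ≤ q'
              · have h1 := (IH (n - s) (by omega) q' (t + r - s) (by omega) (by omega)).2.2
                  hq'' (by omega)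
                omega
              · have h1 := (IH (n - s) (by omega) q' (t + r - s) (by omega) (by omega)).1 (by omega)
                omega
          · have hrd : t ∣ r := (Nat.dvd_add_right (dvd_mul_left t (q' + 1))).mp (hn ▸ hdvd)
            exact absurd (Nat.eq_zero_of_dvd_of_lt hrd hr) hr0
        · intro j hj
          refine ⟨n - (r - 1 - j), (mem_opts ht).mpr
            (Or.inl ⟨r - 1 - j, by omega, by omega, by omega, rfl⟩), ?_⟩
          have h1 := (IH (n - (r - 1 - j)) (by omega) (q' + 1) (j + 1) (by omega) (by omega)).2.2
            (by omega) (by omega)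
          omega

/-- Sprague-Grundy values of i-Mark([1,t-1],{t}). -/
theorem iMark_t_t_grundy (t : ℕ) (ht : 2 ≤ t) (n q r : ℕ) (hn : n = q * t + r) (hr : r < t) :
    (((q < t ∧ r = 0) ∨ (t ≤ q ∧ r = 1)) → grundy (Finset.Icc 1 (t - 1)) {t} n = 0) ∧
    ((q < t ∧ r ≠ 0) → grundy (Finset.Icc 1 (t - 1)) {t} n = r) ∧
    ((t ≤ q ∧ 1 < r) → grundy (Finset.Icc 1 (t - 1)) {t} n = r - 1) ∧
    ((t ≤ q ∧ r = 0) →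
      grundy (Finset.Icc 1 (t - 1)) {t} n = t - 1 ∨ grundy (Finset.Icc 1 (t - 1)) {t} n = t) := by
  obtain ⟨h1, h2, h3⟩ := key t ht n q r hn hr
  refine ⟨?_, ?_, ?_, ?_⟩
  · rintro (⟨hq, rfl⟩ | ⟨hq, rfl⟩)
    · exact h1 hq
    · simpa using h3 hq one_ne_zero
  · rintro ⟨hq, _⟩
    exact h1 hq
  · rintro ⟨hq, hr1⟩
    exact h3 hq (by omega)
  · rintro ⟨hq, hr0⟩
    exact h2 hq hr0
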